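/- Let R be an algebraically closed field of characteristic p ≥ 0 and let σ ∈ Σ_n have cycle type λ = (λ_1,…,λ_s) with p ∤ λ_i for all 1 ≤ i ≤ s. For 1 ≤ j ≤ s let V_j be the set of λ_j-th roots of unity in R, and for 1 ≤ i ≤ s let h_i(σ) be the number of elements of V_1 ∪ … ∪ V_s that belong to exactly i of the sets V_1,…,V_s. Then there is a ring isomorphism S_n(σ,R) ≅ R^{h_1(σ)} × M_2(R)^{h_2(σ)} × ⋯ × M_s(R)^{h_s(σ)}, where M_i(R)^{h_i(σ)} denotes the direct product of h_i(σ) copies of the matrix ring M_i(R). -/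

import Mathlib

open Matrix

/-- The `σ`-invariant matrix ring `S_n(σ,R) = {a ∈ M_n(R) | a_{ij} = a_{σ(i)σ(j)}}`. -/
def invariantSubring (R : Type*) [Ring R] {n : ℕ} (σ : Equiv.Perm (Fin n)) :
    Subring (Matrix (Fin n) (Fin n) R) where
  carrier := {a | ∀ i j, a i j = a (σ i) (σ j)}
  zero_mem' := fun i j => rfl
  one_mem' := fun i j => by
    simp [Matrix.one_apply, EmbeddingLike.apply_eq_iff_eq]
  add_mem' := fun {a b} ha hb i j => by
    simp only [Matrix.add_apply]; rw [ha i j, hb i j]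
  neg_mem' := fun {a} ha i j => by
    simp only [Matrix.neg_apply]; rw [ha i j]
  mul_mem' := fun {a b} ha hb i j => by
    simp only [Matrix.mul_apply]
    calc ∑ k, a i k * b k j
        = ∑ k, a (σ i) (σ k) * b (σ k) (σ j) :=
          Finset.sum_congr rfl fun k _ => by rw [← ha, ← hb]
      _ = ∑ k, a (σ i) k * b k (σ j) := Equiv.sum_comp σ fun k => a (σ i) k * b k (σ j)

/-- `σ ∈ Σ_n` has cycle type `(lam 0, …, lam (s-1))`, where fixed points are counted
as parts equal to `1`: the multiset of lengths of the disjoint cycles of `σ`, together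
with one part `1` for each fixed point, is the multiset of values of `lam`. -/
def HasFullCycleType {n s : ℕ} (σ : Equiv.Perm (Fin n)) (lam : Fin s → ℕ) : Prop :=
  σ.cycleType + Multiset.replicate (n - σ.cycleType.sum) 1 = (List.ofFn lam : Multiset ℕ)

/-- With `V_j` the set of `λ_j`-th roots of unity in `R`, `hCount R lam i` is the number
`h_i` of elements of `V_1 ∪ … ∪ V_s` that belong to exactly `i` of the sets `V_1,…,V_s`. -/
noncomputable def hCount (R : Type*) [Field R] {s : ℕ} (lam : Fin s → ℕ) (i : ℕ) : ℕ :=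
  Set.ncard {x : R | (∃ j, x ^ lam j = 1) ∧ Set.ncard {j : Fin s | x ^ lam j = 1} = i}

namespace InvW

open Equiv Polynomial

attribute [local instance] Classical.propDecidable

lemma pow_mod_of_pow_eq_one {M : Type*} [Monoid M] {ζ : M} {m : ℕ} (h : ζ ^ m = 1) (a : ℕ) :
    ζ ^ (a % m) = ζ ^ a := by
  conv_rhs => rw [← Nat.div_add_mod a m]
  rw [pow_add, pow_mul, h, one_pow, one_mul]

lemma val_finRotate {m : ℕ} (x : Fin m) : ((finRotate m) x : ℕ) = ((x : ℕ) + 1) % m := by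
  match m, x with
  | m + 1, x =>
    rw [finRotate_succ_apply, Fin.add_def, Fin.val_one']
    have hx : (x : ℕ) % (m + 1) = (x : ℕ) := Nat.mod_eq_of_lt x.isLt
    conv_rhs => rw [Nat.add_mod, hx]

lemma sum_pow_eq_zero {R : Type*} [Field R] {η : R} {m : ℕ} (hm : η ^ m = 1) (h1 : η ≠ 1) :
    ∑ x : Fin m, η ^ (x : ℕ) = 0 := by
  rw [Fin.sum_univ_eq_sum_range, geom_sum_eq h1, hm, sub_self, zero_div]

/-- `Pi` ring currying over a sigma type. -/
def ringPiCurry {ι : Type*} {κ : ι → Type*} (S : (Σ i, κ i) → Type*)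
    [∀ p, NonUnitalNonAssocSemiring (S p)] :
    ((p : Σ i, κ i) → S p) ≃+* ((i : ι) → (k : κ i) → S ⟨i, k⟩) where
  toEquiv := Equiv.piCurry fun i k => S ⟨i, k⟩
  map_mul' _ _ := by rfl
  map_add' _ _ := by rfl

/-- `Pi` ring congruence along an equiv of index types. -/
def ringPiCongrLeft' {α β : Type*} (S : α → Type*) [∀ a, NonUnitalNonAssocSemiring (S a)]
    (e : α ≃ β) : ((a : α) → S a) ≃+* ((b : β) → S (e.symm b)) where
  toEquiv := Equiv.piCongrLeft' S e
  map_mul' _ _ := by rfl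
  map_add' _ _ := by rfl

lemma matrix_mul_eq_one_comm {R K I : Type*} [Fintype K] [Fintype I] [DecidableEq K]
    [DecidableEq I] [CommRing R] (e : I ≃ K) {A : Matrix K I R} {B : Matrix I K R}
    (h : A * B = 1) : B * A = 1 := by
  have h1 : A.submatrix (⇑e) (id : I → I) * B.submatrix (id : I → I) (⇑e) = 1 := by
    have := Matrix.submatrix_mul_equiv A B (⇑e) (Equiv.refl I) (⇑e)
    simpa [h] using this
  have h2 : B.submatrix (id : I → I) (⇑e) * A.submatrix (⇑e) (id : I → I) = 1 :=
    mul_eq_one_comm.mp h1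
  have h3 := Matrix.submatrix_mul_equiv B A (id : I → I) e (id : I → I)
  rw [h3] at h2
  simpa using h2


/-- generalized invariant subring -/
def invSub (R : Type*) [Ring R] {α : Type*} [Fintype α] [DecidableEq α] (σ : Equiv.Perm α) :
    Subring (Matrix α α R) where
  carrier := {a | ∀ i j, a i j = a (σ i) (σ j)}
  zero_mem' := fun i j => rfl
  one_mem' := fun i j => by
    simp [Matrix.one_apply, EmbeddingLike.apply_eq_iff_eq]
  add_mem' := fun {a b} ha hb i j => by
    simp only [Matrix.add_apply]; rw [ha i j, hb i j]
  neg_mem' := fun {a} ha i j => by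
    simp only [Matrix.neg_apply]; rw [ha i j]
  mul_mem' := fun {a b} ha hb i j => by
    simp only [Matrix.mul_apply]
    calc ∑ k, a i k * b k j
        = ∑ k, a (σ i) (σ k) * b (σ k) (σ j) :=
          Finset.sum_congr rfl fun k _ => by rw [← ha, ← hb]
      _ = ∑ k, a (σ i) k * b k (σ j) := Equiv.sum_comp σ fun k => a (σ i) k * b k (σ j)

lemma mem_invSub {R : Type*} [Ring R] {α : Type*} [Fintype α] [DecidableEq α]
    {σ : Equiv.Perm α} {a : Matrix α α R} :
    a ∈ invSub R σ ↔ ∀ i j, a i j = a (σ i) (σ j) := Iff.rfl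

/-- transport of invariant subrings along an intertwining equiv -/
noncomputable def invSubCongr {R : Type*} [Ring R] {α β : Type*} [Fintype α] [DecidableEq α]
    [Fintype β] [DecidableEq β] (σ : Equiv.Perm α) (τ : Equiv.Perm β) (e : α ≃ β)
    (h : ∀ x, e (σ x) = τ (e x)) : invSub R σ ≃+* invSub R τ where
  toFun a := ⟨(a : Matrix α α R).submatrix ⇑e.symm ⇑e.symm, by
    intro i j
    have h1 : ∀ y, e.symm (τ y) = σ (e.symm y) := fun y => by
      apply e.injective; rw [h (e.symm y)]; simp
    simp only [Matrix.submatrix_apply]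
    rw [h1 i, h1 j]
    exact a.2 _ _⟩
  invFun a := ⟨(a : Matrix β β R).submatrix ⇑e ⇑e, by
    intro i j
    simp only [Matrix.submatrix_apply]
    rw [h i, h j]
    exact a.2 _ _⟩
  left_inv a := by
    ext i j
    simp [Matrix.submatrix_apply]
  right_inv a := by
    ext i j
    simp [Matrix.submatrix_apply]
  map_mul' a b := by
    ext i j
    simp only [Subring.coe_mul, Matrix.submatrix_apply]
    rw [Matrix.submatrix_mul_equiv (a : Matrix α α R) (b : Matrix α α R) ⇑e.symm e.symm ⇑e.symm]
    simp [Matrix.submatrix_apply]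
  map_add' a b := by
    ext i j
    simp [Matrix.submatrix_apply]


variable {s : ℕ} (lam : Fin s → ℕ)

/-- the model permutation: rotate each block -/
def sigma0 : Equiv.Perm ((j : Fin s) × Fin (lam j)) :=
  Equiv.sigmaCongrRight fun j => finRotate (lam j)

lemma sigma0_apply (j : Fin s) (x : Fin (lam j)) :
    sigma0 lam ⟨j, x⟩ = ⟨j, finRotate (lam j) x⟩ := rfl

/-- the fiber of the sigma type over `j` -/
def fiberEquiv (j : Fin s) : Fin (lam j) ≃ {u : (j' : Fin s) × Fin (lam j') // u.1 = j} where
  toFun x := ⟨⟨j, x⟩, rfl⟩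
  invFun u := Fin.cast (by rw [u.2]) u.1.2
  left_inv x := rfl
  right_inv u := by
    obtain ⟨⟨j', x⟩, h⟩ := u
    subst h
    rfl

/-- the cycle supported on block `j` -/
def piece (j : Fin s) : Equiv.Perm ((j' : Fin s) × Fin (lam j')) :=
  (finRotate (lam j)).extendDomain (fiberEquiv lam j)

lemma piece_apply_eq (j : Fin s) (x : Fin (lam j)) :
    piece lam j ⟨j, x⟩ = ⟨j, finRotate (lam j) x⟩ := by
  have h : (⟨j, x⟩ : (j' : Fin s) × Fin (lam j')).1 = j := rfl
  rw [piece, Equiv.Perm.extendDomain_apply_subtype (finRotate (lam j)) (fiberEquiv lam j) h]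
  rfl

lemma piece_apply_ne {j k : Fin s} (h : k ≠ j) (x : Fin (lam k)) :
    piece lam j ⟨k, x⟩ = ⟨k, x⟩ :=
  Equiv.Perm.extendDomain_apply_not_subtype _ _ h

lemma prod_pieces (L : List (Fin s)) (hL : L.Nodup) (k : Fin s) (x : Fin (lam k)) :
    (L.map (piece lam)).prod ⟨k, x⟩ =
      if k ∈ L then sigma0 lam ⟨k, x⟩ else ⟨k, x⟩ := by
  induction L with
  | nil => simp
  | cons j L ih =>
    rw [List.map_cons, List.prod_cons, Equiv.Perm.mul_apply,
      ih (List.nodup_cons.mp hL).2]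
    by_cases hk : k ∈ L
    · have hkj : k ≠ j := fun h => (List.nodup_cons.mp hL).1 (h ▸ hk)
      rw [if_pos hk, if_pos (List.mem_cons.mpr (Or.inr hk)), sigma0_apply,
        piece_apply_ne lam hkj]
    · rw [if_neg hk]
      by_cases hkj : k = j
      · subst hkj
        rw [piece_apply_eq, if_pos List.mem_cons_self, sigma0_apply]
      · rw [piece_apply_ne lam hkj, if_neg (by simp [hkj, hk])]

lemma prod_pieces_filter (hpos : ∀ j, 1 ≤ lam j) :
    (((List.finRange s).filter (fun j => 2 ≤ lam j)).map (piece lam)).prod = sigma0 lam := by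
  refine Equiv.ext fun u => ?_
  obtain ⟨k, x⟩ := u
  rw [prod_pieces lam _ (List.Nodup.filter _ (List.nodup_finRange s))]
  by_cases hk : 2 ≤ lam k
  · rw [if_pos (by simp [List.mem_filter, hk, List.mem_finRange])]
  · rw [if_neg (by simp [List.mem_filter, hk])]
    have h1 : lam k = 1 := by have := hpos k; omega
    rw [sigma0_apply]
    haveI : Subsingleton (Fin (lam k)) := by rw [h1]; infer_instance
    rw [Subsingleton.elim ((finRotate (lam k)) x) x]

lemma isCycle_piece {j : Fin s} (h : 2 ≤ lam j) : (piece lam j).IsCycle :=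
  (isCycle_finRotate_of_le h).extendDomain _

lemma card_support_piece {j : Fin s} (h : 2 ≤ lam j) :
    (piece lam j).support.card = lam j := by
  rw [piece, Equiv.Perm.card_support_extend_domain, support_finRotate_of_le h,
    Finset.card_univ, Fintype.card_fin]

lemma disjoint_piece {j j' : Fin s} (h : j ≠ j') :
    Equiv.Perm.Disjoint (piece lam j) (piece lam j') := by
  intro u
  obtain ⟨k, x⟩ := u
  by_cases hk : k = j
  · subst hk
    exact Or.inr (piece_apply_ne lam h x)
  · exact Or.inl (piece_apply_ne lam hk x)

lemma cycleType_sigma0 (hpos : ∀ j, 1 ≤ lam j) :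
    (sigma0 lam).cycleType =
      ↑(((List.finRange s).filter (fun j => 2 ≤ lam j)).map lam) := by
  rw [Equiv.Perm.cycleType_eq (((List.finRange s).filter (fun j => 2 ≤ lam j)).map (piece lam))
    (prod_pieces_filter lam hpos) ?_ ?_]
  · rw [List.map_map]
    congr 1
    apply List.map_congr_left
    intro j hj
    have : 2 ≤ lam j := by simpa using (List.mem_filter.mp hj).2
    exact card_support_piece lam this
  · intro τ hτ
    obtain ⟨j, hj, rfl⟩ := List.mem_map.mp hτ
    exact isCycle_piece lam (by simpa using (List.mem_filter.mp hj).2)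
  · refine List.Pairwise.map _ ?_ ((List.Nodup.filter _ (List.nodup_finRange s)))
    intro j j' h
    exact disjoint_piece lam h

lemma cycleType_permCongr {α β : Type*} [Fintype α] [DecidableEq α] [Fintype β] [DecidableEq β]
    (e : α ≃ β) (f : Equiv.Perm α) :
    (e.permCongr f).cycleType = f.cycleType := by
  have key : e.permCongr f
      = f.extendDomain (e.trans (Equiv.subtypeUnivEquiv (fun _ : β => trivial)).symm) := by
    ext b
    rw [Equiv.Perm.extendDomain_apply_subtype _ _ trivial]
    rfl
  rw [key, Equiv.Perm.cycleType_extendDomain]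


lemma filter_ofFn_eq :
    ((List.ofFn lam : Multiset ℕ)).filter (fun m => 2 ≤ m) =
      ↑(((List.finRange s).filter (fun j => 2 ≤ lam j)).map lam) := by
  rw [List.ofFn_eq_map]
  rw [Multiset.filter_coe]
  congr 1
  rw [List.filter_map]
  congr 1

lemma cycleType_eq_model {n : ℕ} (σ : Equiv.Perm (Fin n)) (hpos : ∀ j, 1 ≤ lam j)
    (hcyc : HasFullCycleType σ lam) :
    σ.cycleType = (sigma0 lam).cycleType := by
  have h2 := congrArg (Multiset.filter (fun m => 2 ≤ m)) hcyc
  rw [Multiset.filter_add] at h2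
  rw [Multiset.filter_eq_self.mpr (fun a ha => Equiv.Perm.two_le_of_mem_cycleType ha)] at h2
  rw [Multiset.filter_eq_nil.mpr (fun a ha => by
    rw [Multiset.eq_of_mem_replicate ha]; omega)] at h2
  rw [add_zero] at h2
  rw [h2, filter_ofFn_eq, cycleType_sigma0 lam hpos]

lemma conj_model {n : ℕ} (σ : Equiv.Perm (Fin n)) (hpos : ∀ j, 1 ≤ lam j)
    (hsum : ∑ i, lam i = n) (hcyc : HasFullCycleType σ lam) :
    ∃ e : ((j : Fin s) × Fin (lam j)) ≃ Fin n, ∀ x, e (sigma0 lam x) = σ (e x) := by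
  have hcard : Fintype.card ((j : Fin s) × Fin (lam j)) = n := by
    simp [Fintype.card_sigma, hsum]
  let g := Fintype.equivFinOfCardEq hcard
  have h1 : (g.permCongr (sigma0 lam)).cycleType = σ.cycleType := by
    rw [cycleType_permCongr, cycleType_eq_model lam σ hpos hcyc]
  obtain ⟨τ, hτ⟩ := isConj_iff.mp (Equiv.Perm.isConj_iff_cycleType_eq.mpr h1)
  refine ⟨g.trans τ, fun x => ?_⟩
  have h2 : σ (τ (g x)) = τ ((g.permCongr (sigma0 lam)) (g x)) := by
    conv_lhs => rw [← hτ]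
    simp [Equiv.Perm.mul_apply]
  simp only [Equiv.trans_apply]
  rw [h2, Equiv.permCongr_apply, Equiv.symm_apply_apply]

variable (R : Type*) [Field R] {s : ℕ} (lam : Fin s → ℕ)

/-- the union of the sets of `lam j`-th roots of unity -/
noncomputable def V : Finset R := Finset.univ.biUnion fun j => nthRootsFinset (lam j) (1 : R)

variable {R}

lemma mem_V (hpos : ∀ j, 1 ≤ lam j) {x : R} : x ∈ V R lam ↔ ∃ j, x ^ lam j = 1 := by
  simp only [V, Finset.mem_biUnion, Finset.mem_univ, true_and]
  exact exists_congr fun j => mem_nthRootsFinset (hpos j) (1 : R)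

/-- the set of indices `j` such that `x` is a `lam j`-th root of unity -/
def Jt (x : R) : Type _ := {j : Fin s // x ^ lam j = 1}

noncomputable instance (x : R) : Fintype (Jt lam x) := by unfold Jt; infer_instance

lemma V_ne_zero (hpos : ∀ j, 1 ≤ lam j) (ζ : ↥(V R lam)) : (ζ : R) ≠ 0 := by
  obtain ⟨j, hj⟩ := (mem_V lam hpos).mp ζ.2
  intro h0
  rw [h0, zero_pow (by have := hpos j; omega)] at hj
  exact zero_ne_one hj

variable (R)

/-- the "Fourier" matrix -/
noncomputable def Pmat :
    Matrix ((j : Fin s) × Fin (lam j)) ((ζ : ↥(V R lam)) × Jt lam (ζ : R)) R :=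
  fun u κ => if u.1 = κ.2.val then (κ.1 : R) ^ (u.2 : ℕ) else 0

/-- the inverse "Fourier" matrix -/
noncomputable def Qmat :
    Matrix ((ζ : ↥(V R lam)) × Jt lam (ζ : R)) ((j : Fin s) × Fin (lam j)) R :=
  fun κ u => if κ.2.val = u.1 then (lam u.1 : R)⁻¹ * ((κ.1 : R)⁻¹) ^ (u.2 : ℕ) else 0

variable {R}

lemma Pmat_sigma0 (hpos : ∀ j, 1 ≤ lam j) (u : (j : Fin s) × Fin (lam j))
    (κ : (ζ : ↥(V R lam)) × Jt lam (ζ : R)) :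
    Pmat R lam (sigma0 lam u) κ = (κ.1 : R) * Pmat R lam u κ := by
  obtain ⟨j, x⟩ := u
  obtain ⟨ζ, k⟩ := κ
  show Pmat R lam ⟨j, finRotate (lam j) x⟩ ⟨ζ, k⟩ = _
  unfold Pmat
  by_cases h : j = k.val
  · simp only [if_pos h]
    have hζ : (ζ : R) ^ lam j = 1 := by rw [h]; exact k.2
    rw [val_finRotate, pow_mod_of_pow_eq_one hζ, pow_succ, mul_comm]
  · simp [h]

lemma Qmat_sigma0 (hpos : ∀ j, 1 ≤ lam j) (κ : (ζ : ↥(V R lam)) × Jt lam (ζ : R))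
    (u : (j : Fin s) × Fin (lam j)) :
    Qmat R lam κ (sigma0 lam u) = ((κ.1 : R))⁻¹ * Qmat R lam κ u := by
  obtain ⟨j, x⟩ := u
  obtain ⟨ζ, k⟩ := κ
  show Qmat R lam ⟨ζ, k⟩ ⟨j, finRotate (lam j) x⟩ = _
  unfold Qmat
  by_cases h : k.val = j
  · simp only [if_pos h]
    have hζ : ((ζ : R)⁻¹) ^ lam j = 1 := by
      rw [← h, inv_pow, k.2, inv_one]
    rw [val_finRotate, pow_mod_of_pow_eq_one hζ, pow_succ]
    ring
  · simp [h]


lemma Q_mul_P (hpos : ∀ j, 1 ≤ lam j) (hchar : ∀ j, (lam j : R) ≠ 0) :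
    Qmat R lam * Pmat R lam = 1 := by
  ext ⟨ζ, k⟩ ⟨ζ', k'⟩
  rw [Matrix.mul_apply, ← Finset.univ_sigma_univ, Finset.sum_sigma]
  have hterm : ∀ (j : Fin s) (x : Fin (lam j)),
      Qmat R lam ⟨ζ, k⟩ ⟨j, x⟩ * Pmat R lam ⟨j, x⟩ ⟨ζ', k'⟩ =
        if k.val = j ∧ j = k'.val then
          (lam j : R)⁻¹ * (((ζ : R))⁻¹ * (ζ' : R)) ^ (x : ℕ) else 0 := by
    intro j x
    unfold Qmat Pmat
    by_cases h1 : k.val = j <;> by_cases h2 : j = k'.val <;>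
      simp [h1, h2, mul_pow, mul_assoc]
  simp only [hterm]
  have hcollapse : ∀ j : Fin s, (∑ x : Fin (lam j),
      if k.val = j ∧ j = k'.val then
        (lam j : R)⁻¹ * (((ζ : R))⁻¹ * (ζ' : R)) ^ (x : ℕ) else 0) =
      if k.val = j then (if j = k'.val then
        (lam j : R)⁻¹ * ∑ x : Fin (lam j), (((ζ : R))⁻¹ * (ζ' : R)) ^ (x : ℕ) else 0) else 0 := by
    intro j
    by_cases h1 : k.val = j <;> by_cases h2 : j = k'.val <;>
      simp [h1, h2, Finset.mul_sum]
  rw [Finset.sum_congr rfl fun j _ => hcollapse j]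
  rw [Finset.sum_ite_eq Finset.univ (k.val : Fin s)
    (fun j => if j = k'.val then (lam j : R)⁻¹ *
      ∑ x : Fin (lam j), (((ζ : R))⁻¹ * (ζ' : R)) ^ (x : ℕ) else 0), if_pos (Finset.mem_univ _)]
  by_cases hk : (k.val : Fin s) = k'.val
  · rw [if_pos hk]
    by_cases hζ : ζ = ζ'
    · have hee : (⟨ζ, k⟩ : (ζ : ↥(V R lam)) × Jt lam (ζ : R)) = ⟨ζ', k'⟩ := by
        subst hζ
        congr 1
        exact Subtype.ext hk
      rw [hee, Matrix.one_apply_eq]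
      have hζ0 : (ζ' : R) ≠ 0 := V_ne_zero lam hpos ζ'
      have : ((ζ' : R))⁻¹ * (ζ' : R) = 1 := inv_mul_cancel₀ hζ0
      subst hζ
      rw [this]
      simp [inv_mul_cancel₀ (hchar k.val)]
    · have hne : (⟨ζ, k⟩ : (ζ : ↥(V R lam)) × Jt lam (ζ : R)) ≠ ⟨ζ', k'⟩ := by
        intro hcon
        exact hζ (congrArg Sigma.fst hcon)
      rw [Matrix.one_apply_ne hne]
      have hη : (((ζ : R))⁻¹ * (ζ' : R)) ^ (lam k.val) = 1 := by
        rw [mul_pow, inv_pow, k.2, inv_one, one_mul, hk, k'.2]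
      have hη1 : ((ζ : R))⁻¹ * (ζ' : R) ≠ 1 := by
        intro hcon
        apply hζ
        apply Subtype.ext
        have hζ0 : (ζ : R) ≠ 0 := V_ne_zero lam hpos ζ
        field_simp at hcon
        exact hcon.symm
      rw [sum_pow_eq_zero hη hη1, mul_zero]
  · rw [if_neg hk]
    have hne : (⟨ζ, k⟩ : (ζ : ↥(V R lam)) × Jt lam (ζ : R)) ≠ ⟨ζ', k'⟩ := by
      intro hcon
      apply hk
      obtain ⟨h1, h2⟩ := Sigma.mk.inj_iff.mp hcon
      subst h1
      rw [eq_of_heq h2]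
    rw [Matrix.one_apply_ne hne]

variable (R)

noncomputable def KEquiv (hpos : ∀ j, 1 ≤ lam j) :
    ((ζ : ↥(V R lam)) × Jt lam (ζ : R)) ≃ ((j : Fin s) × ↥(nthRootsFinset (lam j) (1 : R))) where
  toFun κ := ⟨κ.2.val, ⟨κ.1.val, (mem_nthRootsFinset (hpos _) (1 : R)).mpr κ.2.2⟩⟩
  invFun p := ⟨⟨p.2.val, (mem_V lam hpos).mpr ⟨p.1, (mem_nthRootsFinset (hpos _) (1 : R)).mp p.2.2⟩⟩,
    ⟨p.1, (mem_nthRootsFinset (hpos _) (1 : R)).mp p.2.2⟩⟩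
  left_inv κ := rfl
  right_inv p := rfl

variable {R}

lemma card_I_eq_card_K [IsAlgClosed R] (hpos : ∀ j, 1 ≤ lam j) (hchar : ∀ j, (lam j : R) ≠ 0) :
    Fintype.card ((j : Fin s) × Fin (lam j)) =
      Fintype.card ((ζ : ↥(V R lam)) × Jt lam (ζ : R)) := by
  rw [Fintype.card_congr (KEquiv R lam hpos)]
  rw [Fintype.card_sigma, Fintype.card_sigma]
  refine Finset.sum_congr rfl fun j _ => ?_
  haveI : NeZero ((lam j : R)) := ⟨hchar j⟩
  obtain ⟨ξ, hξ⟩ := HasEnoughRootsOfUnity.exists_primitiveRoot R (lam j)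
  rw [Fintype.card_fin, Fintype.card_coe, hξ.card_nthRootsFinset]


lemma P_mul_Q [IsAlgClosed R] (hpos : ∀ j, 1 ≤ lam j) (hchar : ∀ j, (lam j : R) ≠ 0) :
    Pmat R lam * Qmat R lam = 1 :=
  matrix_mul_eq_one_comm (Fintype.equivOfCardEq (card_I_eq_card_K lam hpos hchar))
    (Q_mul_P lam hpos hchar)

lemma triple_apply {I K : Type*} [Fintype I] [Fintype K]
    (A : Matrix I K R) (X : Matrix K K R) (B : Matrix K I R) (u v : I) :
    (A * X * B) u v = ∑ κ, ∑ κ', A u κ * X κ κ' * B κ' v := by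
  rw [Matrix.mul_apply]
  rw [Finset.sum_comm]
  refine Finset.sum_congr rfl fun κ' _ => ?_
  rw [Matrix.mul_apply, Finset.sum_mul]

section Core

variable [IsAlgClosed R]

lemma sandwich (hpos : ∀ j, 1 ≤ lam j) (hchar : ∀ j, (lam j : R) ≠ 0)
    (X Y : Matrix ((ζ : ↥(V R lam)) × Jt lam (ζ : R))
    ((ζ : ↥(V R lam)) × Jt lam (ζ : R)) R) :
    (Pmat R lam * X * Qmat R lam) * (Pmat R lam * Y * Qmat R lam) =
      Pmat R lam * (X * Y) * Qmat R lam := by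
  have h := Q_mul_P lam hpos hchar
  calc (Pmat R lam * X * Qmat R lam) * (Pmat R lam * Y * Qmat R lam)
      = Pmat R lam * (X * ((Qmat R lam * Pmat R lam) * (Y * Qmat R lam))) := by
        simp only [Matrix.mul_assoc]
    _ = Pmat R lam * (X * Y) * Qmat R lam := by
        rw [h, Matrix.one_mul]
        simp only [Matrix.mul_assoc]

lemma unsandwichQ (hpos : ∀ j, 1 ≤ lam j) (hchar : ∀ j, (lam j : R) ≠ 0)
    (X : Matrix ((j : Fin s) × Fin (lam j)) ((j : Fin s) × Fin (lam j)) R) :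
    Pmat R lam * (Qmat R lam * X * Pmat R lam) * Qmat R lam = X := by
  have h := P_mul_Q lam hpos hchar
  calc Pmat R lam * (Qmat R lam * X * Pmat R lam) * Qmat R lam
      = (Pmat R lam * Qmat R lam) * (X * (Pmat R lam * Qmat R lam)) := by
        simp only [Matrix.mul_assoc]
    _ = X := by rw [h, Matrix.one_mul, Matrix.mul_one]

lemma unsandwichP (hpos : ∀ j, 1 ≤ lam j) (hchar : ∀ j, (lam j : R) ≠ 0)
    (X : Matrix ((ζ : ↥(V R lam)) × Jt lam (ζ : R))
    ((ζ : ↥(V R lam)) × Jt lam (ζ : R)) R) :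
    Qmat R lam * (Pmat R lam * X * Qmat R lam) * Pmat R lam = X := by
  have h := Q_mul_P lam hpos hchar
  calc Qmat R lam * (Pmat R lam * X * Qmat R lam) * Pmat R lam
      = (Qmat R lam * Pmat R lam) * (X * (Qmat R lam * Pmat R lam)) := by
        simp only [Matrix.mul_assoc]
    _ = X := by rw [h, Matrix.one_mul, Matrix.mul_one]

/-- the conjugation ring hom from the block-diagonal product ring into matrices -/
noncomputable def psi (hpos : ∀ j, 1 ≤ lam j) (hchar : ∀ j, (lam j : R) ≠ 0) :
    (((ζ : ↥(V R lam)) → Matrix (Jt lam (ζ : R)) (Jt lam (ζ : R)) R)) →+*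
      Matrix ((j : Fin s) × Fin (lam j)) ((j : Fin s) × Fin (lam j)) R where
  toFun b := Pmat R lam * Matrix.blockDiagonal' b * Qmat R lam
  map_one' := by
    show Pmat R lam * Matrix.blockDiagonal' 1 * Qmat R lam = 1
    rw [Matrix.blockDiagonal'_one, Matrix.mul_one, P_mul_Q lam hpos hchar]
  map_mul' b b' := by
    show Pmat R lam * Matrix.blockDiagonal' (b * b') * Qmat R lam =
      (Pmat R lam * Matrix.blockDiagonal' b * Qmat R lam) *
        (Pmat R lam * Matrix.blockDiagonal' b' * Qmat R lam)
    rw [sandwich lam hpos hchar, show b * b' = fun ζ => b ζ * b' ζ from rfl,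
      ← Matrix.blockDiagonal'_mul]
  map_zero' := by
    show Pmat R lam * Matrix.blockDiagonal' 0 * Qmat R lam = 0
    rw [Matrix.blockDiagonal'_zero, Matrix.mul_zero, Matrix.zero_mul]
  map_add' b b' := by
    show Pmat R lam * Matrix.blockDiagonal' (b + b') * Qmat R lam =
      Pmat R lam * Matrix.blockDiagonal' b * Qmat R lam +
        Pmat R lam * Matrix.blockDiagonal' b' * Qmat R lam
    rw [show Matrix.blockDiagonal' (b + b') =
        Matrix.blockDiagonal' b + Matrix.blockDiagonal' b' from Matrix.blockDiagonal'_add b b',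
      Matrix.mul_add, Matrix.add_mul]

lemma psi_mem (hpos : ∀ j, 1 ≤ lam j) (hchar : ∀ j, (lam j : R) ≠ 0) (b : (ζ : ↥(V R lam)) → Matrix (Jt lam (ζ : R)) (Jt lam (ζ : R)) R) :
    psi lam hpos hchar b ∈ invSub R (sigma0 lam) := by
  intro u v
  show (Pmat R lam * Matrix.blockDiagonal' b * Qmat R lam) u v =
    (Pmat R lam * Matrix.blockDiagonal' b * Qmat R lam) (sigma0 lam u) (sigma0 lam v)
  rw [triple_apply, triple_apply]
  refine Finset.sum_congr rfl fun κ _ => Finset.sum_congr rfl fun κ' _ => ?_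
  rw [Pmat_sigma0 lam hpos, Qmat_sigma0 lam hpos]
  by_cases hζ : κ.1 = κ'.1
  · have hc : (κ.1 : R) * ((κ.1 : R))⁻¹ = 1 :=
      mul_inv_cancel₀ (V_ne_zero lam hpos κ.1)
    rw [← hζ]
    calc Pmat R lam u κ * blockDiagonal' b κ κ' * Qmat R lam κ' v
        = ((κ.1 : R) * ((κ.1 : R))⁻¹) *
            (Pmat R lam u κ * blockDiagonal' b κ κ' * Qmat R lam κ' v) := by
          rw [hc, one_mul]
      _ = (κ.1 : R) * Pmat R lam u κ * blockDiagonal' b κ κ' *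
            (((κ.1 : R))⁻¹ * Qmat R lam κ' v) := by ring
  · obtain ⟨ζ, k⟩ := κ
    obtain ⟨ζ', k'⟩ := κ'
    rw [Matrix.blockDiagonal'_apply_ne b _ _ hζ]
    simp

end Core

section Core2

variable [IsAlgClosed R]

lemma key_vanish (hpos : ∀ j, 1 ≤ lam j)
    {a : Matrix ((j : Fin s) × Fin (lam j)) ((j : Fin s) × Fin (lam j)) R}
    (ha : ∀ i j, a i j = a (sigma0 lam i) (sigma0 lam j))
    (κ κ' : (ζ : ↥(V R lam)) × Jt lam (ζ : R)) (hne : κ.1 ≠ κ'.1) :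
    (Qmat R lam * a * Pmat R lam) κ κ' = 0 := by
  have h1 : ∀ v, (Qmat R lam * a) κ (sigma0 lam v) =
      ((κ.1 : R))⁻¹ * (Qmat R lam * a) κ v := by
    intro v
    rw [Matrix.mul_apply, Matrix.mul_apply, Finset.mul_sum]
    rw [← Equiv.sum_comp (sigma0 lam)
      (fun u => Qmat R lam κ u * a u (sigma0 lam v))]
    refine Finset.sum_congr rfl fun u _ => ?_
    rw [Qmat_sigma0 lam hpos, ← ha u v]
    ring
  have h2 : (Qmat R lam * a * Pmat R lam) κ κ' =
      (((κ.1 : R))⁻¹ * (κ'.1 : R)) * (Qmat R lam * a * Pmat R lam) κ κ' := by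
    conv_lhs => rw [Matrix.mul_apply]
    rw [← Equiv.sum_comp (sigma0 lam)
      (fun v => (Qmat R lam * a) κ v * Pmat R lam v κ')]
    rw [Matrix.mul_apply, Finset.mul_sum]
    refine Finset.sum_congr rfl fun v _ => ?_
    rw [h1 v, Pmat_sigma0 lam hpos]
    ring
  have hζ0 : (κ.1 : R) ≠ 0 := V_ne_zero lam hpos κ.1
  have hc : ((κ.1 : R))⁻¹ * (κ'.1 : R) ≠ 1 := by
    intro hcon
    apply hne
    apply Subtype.ext
    field_simp at hcon
    exact hcon.symm
  have h3 : (1 - ((κ.1 : R))⁻¹ * (κ'.1 : R)) * (Qmat R lam * a * Pmat R lam) κ κ' = 0 := by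
    linear_combination h2
  rcases mul_eq_zero.mp h3 with h | h
  · exact absurd (by linear_combination -h) hc
  · exact h

lemma psi_bijective (hpos : ∀ j, 1 ≤ lam j) (hchar : ∀ j, (lam j : R) ≠ 0) :
    Function.Bijective ((psi lam hpos hchar).codRestrict (invSub R (sigma0 lam))
      (psi_mem lam hpos hchar)) := by
  constructor
  · intro b b' h
    have h' : Pmat R lam * Matrix.blockDiagonal' b * Qmat R lam =
        Pmat R lam * Matrix.blockDiagonal' b' * Qmat R lam :=
      congrArg Subtype.val h
    have h2 := congrArg (fun X => Qmat R lam * X * Pmat R lam) h'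
    simp only [unsandwichP lam hpos hchar] at h2
    exact Matrix.blockDiagonal'_injective h2
  · rintro ⟨a, ha⟩
    set w := Qmat R lam * a * Pmat R lam with hw
    refine ⟨fun ζ => fun k k' => w ⟨ζ, k⟩ ⟨ζ, k'⟩, ?_⟩
    have hbd : Matrix.blockDiagonal' (fun ζ => fun k k' => w ⟨ζ, k⟩ ⟨ζ, k'⟩) = w := by
      ext ⟨ζ, k⟩ ⟨ζ', k'⟩
      by_cases h : ζ = ζ'
      · subst h
        exact Matrix.blockDiagonal'_apply_eq (fun ζ => fun k k' => w ⟨ζ, k⟩ ⟨ζ, k'⟩) ζ k k'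
      · refine (Matrix.blockDiagonal'_apply_ne _ _ _ h).trans ?_
        exact (key_vanish lam hpos ha ⟨ζ, k⟩ ⟨ζ', k'⟩ h).symm
    apply Subtype.ext
    show Pmat R lam * Matrix.blockDiagonal' (fun ζ => fun k k' => w ⟨ζ, k⟩ ⟨ζ, k'⟩) * Qmat R lam = a
    rw [hbd, hw, unsandwichQ lam hpos hchar]

/-- the model isomorphism -/
noncomputable def modelIso (hpos : ∀ j, 1 ≤ lam j) (hchar : ∀ j, (lam j : R) ≠ 0) :
    (((ζ : ↥(V R lam)) → Matrix (Jt lam (ζ : R)) (Jt lam (ζ : R)) R)) ≃+*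
      invSub R (sigma0 lam) :=
  RingEquiv.ofBijective _ (psi_bijective lam hpos hchar)

end Core2

section Count


lemma ncard_setOf_eq_card (x : R) :
    Set.ncard {j : Fin s | x ^ lam j = 1} = Fintype.card (Jt lam x) := by
  rw [← Nat.card_coe_set_eq, Nat.card_eq_fintype_card]
  exact Fintype.card_congr (Equiv.subtypeEquivRight fun j => Iff.rfl)

variable (R)

/-- the roots of unity with exactly `i+1` memberships -/
def Wt (i : Fin s) : Type _ :=
  {ζ : ↥(V R lam) // Fintype.card (Jt lam (ζ : R)) = (i : ℕ) + 1}

noncomputable instance (i : Fin s) : Fintype (Wt R lam i) := by unfold Wt; infer_instance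

variable {R}

lemma card_Jt_pos (hpos : ∀ j, 1 ≤ lam j) (ζ : ↥(V R lam)) :
    1 ≤ Fintype.card (Jt lam (ζ : R)) := by
  obtain ⟨j, hj⟩ := (mem_V lam hpos).mp ζ.2
  exact Fintype.card_pos_iff.mpr ⟨⟨j, hj⟩⟩

lemma card_Jt_le (ζ : ↥(V R lam)) : Fintype.card (Jt lam (ζ : R)) ≤ s := by
  have h := Fintype.card_subtype_le (fun j : Fin s => (ζ : R) ^ lam j = 1)
  rw [Fintype.card_fin] at h
  exact (Fintype.card_congr (β := {j : Fin s // (ζ : R) ^ lam j = 1}) (Equiv.refl _)).trans_le h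

lemma card_Wt (hpos : ∀ j, 1 ≤ lam j) (i : Fin s) :
    Fintype.card (Wt R lam i) = hCount R lam ((i : ℕ) + 1) := by
  rw [← Nat.card_eq_fintype_card, hCount, ← Nat.card_coe_set_eq]
  refine Nat.card_congr (Equiv.symm ?_)
  exact {
    toFun := fun x => ⟨⟨x.1, (mem_V lam hpos).mpr x.2.1⟩, by
      rw [← ncard_setOf_eq_card]; exact x.2.2⟩
    invFun := fun w => ⟨w.1.1, ⟨(mem_V lam hpos).mp w.1.2, by
      rw [ncard_setOf_eq_card]; exact w.2⟩⟩
    left_inv := fun x => rfl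
    right_inv := fun w => rfl }

/-- partition of the roots of unity by multiplicity -/
noncomputable def EV (hpos : ∀ j, 1 ≤ lam j) : ↥(V R lam) ≃ (i : Fin s) × Wt R lam i where
  toFun ζ := ⟨⟨Fintype.card (Jt lam (ζ : R)) - 1, by
      have h1 := card_Jt_pos lam hpos ζ
      have h2 := card_Jt_le lam ζ
      omega⟩, ⟨ζ, by
      have h1 := card_Jt_pos lam hpos ζ
      simp only []
      omega⟩⟩
  invFun p := p.2.1
  left_inv ζ := rfl
  right_inv := by
    rintro ⟨i, ζ, hζ⟩
    have hi : (⟨Fintype.card (Jt lam (ζ : R)) - 1, by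
        have h1 := card_Jt_pos lam hpos ζ
        have h2 := card_Jt_le lam ζ
        omega⟩ : Fin s) = i := by
      apply Fin.ext
      simp only []
      omega
    refine Sigma.ext hi ?_
    refine (Subtype.heq_iff_coe_eq fun x => ?_).mpr rfl
    show Fintype.card (Jt lam (x : R)) = (Fintype.card (Jt lam (ζ : R)) - 1) + 1 ↔
      Fintype.card (Jt lam (x : R)) = (i : ℕ) + 1
    omega

/-- reindexing of matrix rings -/
noncomputable def matCongr {m n : Type*} [Fintype m] [Fintype n] [DecidableEq m] [DecidableEq n]
    (e : m ≃ n) : Matrix m m R ≃+* Matrix n n R :=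
  (Matrix.reindexAlgEquiv R R e).toRingEquiv

/-- the counting isomorphism -/
noncomputable def partC (hpos : ∀ j, 1 ≤ lam j) :
    ((ζ : ↥(V R lam)) → Matrix (Jt lam (ζ : R)) (Jt lam (ζ : R)) R) ≃+*
      ((i : Fin s) → Fin (hCount R lam ((i : ℕ) + 1)) →
        Matrix (Fin ((i : ℕ) + 1)) (Fin ((i : ℕ) + 1)) R) :=
  ((ringPiCongrLeft' (fun ζ : ↥(V R lam) => Matrix (Jt lam (ζ : R)) (Jt lam (ζ : R)) R)
      (EV lam hpos)).trans
    ((ringPiCurry (fun p : (i : Fin s) × Wt R lam i =>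
        Matrix (Jt lam (p.2.1 : R)) (Jt lam (p.2.1 : R)) R)).trans
      (RingEquiv.piCongrRight fun i =>
        (RingEquiv.piCongrRight fun w : Wt R lam i =>
            (matCongr (Fintype.equivFinOfCardEq w.2) :
              Matrix (Jt lam (w.1 : R)) (Jt lam (w.1 : R)) R ≃+*
                Matrix (Fin ((i : ℕ) + 1)) (Fin ((i : ℕ) + 1)) R)).trans
          (ringPiCongrLeft'
            (fun _ : Wt R lam i => Matrix (Fin ((i : ℕ) + 1)) (Fin ((i : ℕ) + 1)) R)
            (Fintype.equivFinOfCardEq (card_Wt lam hpos i))))))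

end Count


end InvW

/-- Let `R` be an algebraically closed field of characteristic `p ≥ 0` and `σ ∈ Σ_n` of
cycle type `λ = (λ_1,…,λ_s)` with `p ∤ λ_i` for all `i`.  Then there is a ring isomorphism
`S_n(σ,R) ≅ R^{h_1(σ)} × M_2(R)^{h_2(σ)} × ⋯ × M_s(R)^{h_s(σ)}`. -/
theorem invariantSubring_wedderburn
    (R : Type*) [Field R] [IsAlgClosed R] (p : ℕ) [CharP R p]
    {n s : ℕ} (σ : Equiv.Perm (Fin n)) (lam : Fin s → ℕ)
    (hpos : ∀ i, 1 ≤ lam i) (hmono : ∀ i j : Fin s, i ≤ j → lam j ≤ lam i)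
    (hsum : ∑ i, lam i = n) (hcyc : HasFullCycleType σ lam)
    (hp : ∀ i, ¬ p ∣ lam i) :
    Nonempty ((invariantSubring R σ) ≃+*
      ((i : Fin s) → Fin (hCount R lam ((i : ℕ) + 1)) →
        Matrix (Fin ((i : ℕ) + 1)) (Fin ((i : ℕ) + 1)) R)) := by
  classical
  have hchar : ∀ i, (lam i : R) ≠ 0 := fun i h =>
    hp i ((CharP.cast_eq_zero_iff R p (lam i)).mp h)
  obtain ⟨e, he⟩ := InvW.conj_model lam σ hpos hsum hcyc
  have heq : invariantSubring R σ = InvW.invSub R σ := SetLike.ext fun a => Iff.rfl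
  exact ⟨((RingEquiv.subringCongr heq).trans
      (InvW.invSubCongr (InvW.sigma0 lam) σ e he).symm).trans
    ((InvW.modelIso lam hpos hchar).symm.trans (InvW.partC lam hpos))⟩
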